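/- All coefficients of the characteristic polynomial of a real skew-symmetric matrix are nonnegative: if det(λI - S) = Σ_{i≥0} c_{2i} λ^{n-2i} then c_{2i} ≥ 0 for all 0 ≤ i ≤ ⌊n/2⌋. -/

import Mathlib

open Matrix Polynomial

/-- A real polynomial, all of whose complex roots are purely imaginary, and which is monic,
has nonnegative coefficients. -/
lemma aux_nonneg_coeff : ∀ (d : ℕ) (p : ℝ[X]), p.natDegree = d → p.Monic →
    (∀ z : ℂ, (p.map (algebraMap ℝ ℂ)).IsRoot z → z.re = 0) → ∀ k, 0 ≤ p.coeff k := by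
  intro d
  induction d using Nat.strong_induction_on with
  | _ d ih =>
    intro p hd hm hr k
    by_cases hd0 : d = 0
    · subst hd0
      have : p = 1 := hm.natDegree_eq_zero.mp hd
      subst this
      rw [coeff_one]
      positivity
    · -- degree ≥ 1, find a root over ℂ
      have hmap : (p.map (algebraMap ℝ ℂ)).natDegree = d := by
        rw [hm.natDegree_map, hd]
      have hdeg : 0 < (p.map (algebraMap ℝ ℂ)).degree := by
        rw [degree_eq_natDegree (fun h => by simp [h] at hmap; omega), hmap]
        exact_mod_cast Nat.pos_of_ne_zero hd0
      obtain ⟨z, hz⟩ := Complex.exists_root hdeg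
      have hzre : z.re = 0 := hr z hz
      by_cases ht : z.im = 0
      · -- z = 0, so X ∣ p
        have hz0 : z = 0 := Complex.ext hzre ht
        subst hz0
        have hc0 : p.coeff 0 = 0 := by
          have h0 := hz
          rw [IsRoot, eval_map, eval₂_at_zero] at h0
          exact (algebraMap ℝ ℂ).injective (by rw [map_zero]; exact h0)
        obtain ⟨q, hq⟩ := X_dvd_iff.mpr hc0
        have hqm : q.Monic := Monic.of_mul_monic_left monic_X (hq ▸ hm)
        have hqd : q.natDegree = d - 1 := by
          have : p.natDegree = (X : ℝ[X]).natDegree + q.natDegree := by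
            rw [hq]; exact natDegree_mul (X_ne_zero) hqm.ne_zero
          simp only [natDegree_X] at this
          omega
        have hqr : ∀ z : ℂ, (q.map (algebraMap ℝ ℂ)).IsRoot z → z.re = 0 := by
          intro w hw
          apply hr
          rw [hq, Polynomial.map_mul, IsRoot, eval_mul, hw.eq_zero, mul_zero]
        have h1 := ih (d - 1) (by omega) q hqd hqm hqr
        rw [hq]
        rcases k with _ | k
        · simp
        · rw [coeff_X_mul]; exact h1 k
      · -- z = t i with t ≠ 0 : (X² + t²) ∣ p
        set t : ℝ := z.im with htdef
        have hzt : z = Complex.I * t := by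
          apply Complex.ext <;> simp [hzre, htdef]
        -- conjugate root
        have hconj : (p.map (algebraMap ℝ ℂ)).IsRoot (-z) := by
          have : (starRingEnd ℂ) ((p.map (algebraMap ℝ ℂ)).eval z) = 0 := by
            rw [hz.eq_zero, map_zero]
          rw [IsRoot, eval_map] at hz ⊢
          rw [eval_map, hom_eval₂] at this
          have hcomp : (starRingEnd ℂ).comp (algebraMap ℝ ℂ) = algebraMap ℝ ℂ := by
            ext x; simp
          rw [hcomp] at this
          have hnz : (starRingEnd ℂ) z = -z := by
            apply Complex.ext <;> simp [hzre]
          rwa [hnz] at this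
        have hne : z ≠ -z := by
          intro h
          have : z.im = 0 := by
            have := congrArg Complex.im h
            simp at this
            linarith
          exact ht this
        have hcop : IsCoprime (X - C z) (X - C (-z)) :=
          isCoprime_X_sub_C_of_isUnit_sub (by simpa using (isUnit_iff_ne_zero.mpr
            (sub_ne_zero.mpr hne)))
        have hdvd1 : (X - C z) ∣ p.map (algebraMap ℝ ℂ) := dvd_iff_isRoot.mpr hz
        have hdvd2 : (X - C (-z)) ∣ p.map (algebraMap ℝ ℂ) := dvd_iff_isRoot.mpr hconj
        have hdvd : (X - C z) * (X - C (-z)) ∣ p.map (algebraMap ℝ ℂ) :=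
          hcop.mul_dvd hdvd1 hdvd2
        set g : ℝ[X] := X ^ 2 + C (t ^ 2) with hgdef
        have hgmap : g.map (algebraMap ℝ ℂ) = (X - C z) * (X - C (-z)) := by
          have hz2 : z ^ 2 = -(t : ℂ) ^ 2 := by
            rw [hzt, mul_pow, Complex.I_sq]; ring
          rw [hgdef, Polynomial.map_add, Polynomial.map_pow, map_X, map_C]
          have hct : (algebraMap ℝ ℂ) (t ^ 2) = -(z ^ 2) := by
            rw [hz2, neg_neg]; simp
          rw [hct, show C (-z ^ 2) = -(C z)^2 by rw [map_neg, map_pow], map_neg]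
          ring
        have hgm : g.Monic := monic_X_pow_add (degree_C_le.trans_lt (by norm_num))
        have hgdvd : g ∣ p := by
          rw [← map_dvd_map (algebraMap ℝ ℂ) (algebraMap ℝ ℂ).injective hgm, hgmap]
          exact hdvd
        obtain ⟨q, hq⟩ := hgdvd
        have hqm : q.Monic := Monic.of_mul_monic_left hgm (hq ▸ hm)
        have hqd : q.natDegree = d - 2 := by
          have : p.natDegree = g.natDegree + q.natDegree := by
            rw [hq]; exact natDegree_mul hgm.ne_zero hqm.ne_zero
          have hgd : g.natDegree = 2 := by
            rw [hgdef]
            compute_degree!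
          omega
        have hqr : ∀ w : ℂ, (q.map (algebraMap ℝ ℂ)).IsRoot w → w.re = 0 := by
          intro w hw
          apply hr
          rw [hq, Polynomial.map_mul, IsRoot, eval_mul, hw.eq_zero, mul_zero]
        have h1 := ih (d - 2) (by omega) q hqd hqm hqr
        have hcoeff : p.coeff k = (q * X ^ 2).coeff k + t ^ 2 * q.coeff k := by
          rw [hq, hgdef]
          ring_nf
          rw [coeff_add, coeff_C_mul]
          ring_nf
        rw [hcoeff, coeff_mul_X_pow']
        have h2 : (0:ℝ) ≤ t ^ 2 * q.coeff k := mul_nonneg (sq_nonneg t) (h1 k)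
        split <;> [exact add_nonneg (h1 _) h2; simpa using h2]

/-- Complex roots of the char poly of a real skew-symmetric matrix are purely imaginary. -/
lemma aux_root_im {n : ℕ} (S : Matrix (Fin n) (Fin n) ℝ) (hskew : Sᵀ = -S)
    (z : ℂ) (hz : (S.charpoly.map (algebraMap ℝ ℂ)).IsRoot z) : z.re = 0 := by
  set M : Matrix (Fin n) (Fin n) ℂ := S.map (algebraMap ℝ ℂ) with hM
  have hMskew : Mᵀ = -M := by
    rw [hM, ← Matrix.transpose_map, hskew]
    ext i j; simp
  have hchar : M.charpoly = S.charpoly.map (algebraMap ℝ ℂ) :=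
    S.charpoly_map (algebraMap ℝ ℂ)
  -- eval of charpoly is det
  have hdet : (z • (1 : Matrix (Fin n) (Fin n) ℂ) - M).det = 0 := by
    have : M.charpoly.eval z = 0 := by rw [hchar]; exact hz.eq_zero
    rw [Matrix.charpoly, eval_det, matPolyEquiv_charmatrix] at this
    rw [Matrix.scalar] at this
    simpa [Matrix.smul_one_eq_diagonal, Pi.algebraMap_def] using this
  obtain ⟨v, hv0, hv⟩ := (Matrix.exists_mulVec_eq_zero_iff).mpr hdet
  have hMv : M.mulVec v = z • v := by
    have := hv
    rw [Matrix.sub_mulVec, sub_eq_zero] at this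
    rw [← this, Matrix.smul_mulVec, Matrix.one_mulVec]
  -- compute a = ⟪v, Mv⟫
  set a : ℂ := star v ⬝ᵥ M.mulVec v with ha
  have haconj : (starRingEnd ℂ) a = -a := by
    simp only [ha, dotProduct, Matrix.mulVec]
    rw [map_sum]
    simp only [_root_.map_mul, map_sum, Pi.star_apply, Complex.star_def, Complex.conj_conj]
    have hMreal : ∀ i j, (starRingEnd ℂ) (M i j) = M i j := by
      intro i j; rw [hM]; simp [Matrix.map_apply]
    calc ∑ i, v i * ∑ j, (starRingEnd ℂ) (M i j) * (starRingEnd ℂ) (v j)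
        = ∑ i, ∑ j, (starRingEnd ℂ) (v j) * (M i j * v i) := by
          simp only [hMreal, Finset.mul_sum]; congr 1; ext i; congr 1; ext j; ring
      _ = ∑ j, (starRingEnd ℂ) (v j) * ∑ i, M i j * v i := by
          rw [Finset.sum_comm]; simp [Finset.mul_sum]
      _ = ∑ j, (starRingEnd ℂ) (v j) * ∑ i, -(M j i * v i) := by
          congr 1; ext j; congr 1; congr 1; ext i
          have := congrFun (congrFun hMskew j) i
          simp only [Matrix.transpose_apply, Matrix.neg_apply] at this
          rw [this]; ring
      _ = -∑ i, (starRingEnd ℂ) (v i) * ∑ j, M i j * v j := by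
          simp [Finset.sum_neg_distrib, Finset.mul_sum]
  -- a = z * s with s real positive
  set s : ℂ := star v ⬝ᵥ v with hs
  have has : a = z * s := by
    rw [ha, hMv, hs, dotProduct_smul]
    simp [dotProduct, Finset.mul_sum]
  have hs_re : s = ((∑ i, Complex.normSq (v i) : ℝ) : ℂ) := by
    rw [hs, dotProduct]
    push_cast
    congr 1; ext i
    simp [Complex.normSq_eq_conj_mul_self]
  have hspos : (0:ℝ) < ∑ i, Complex.normSq (v i) := by
    have : ∃ i, v i ≠ 0 := by
      by_contra h
      push_neg at h
      exact hv0 (funext h)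
    obtain ⟨i, hi⟩ := this
    apply Finset.sum_pos' (fun j _ => Complex.normSq_nonneg _)
    exact ⟨i, Finset.mem_univ i, Complex.normSq_pos.mpr hi⟩
  -- real part of a is zero
  have hare : a.re = 0 := by
    have := congrArg Complex.re haconj
    simp only [Complex.conj_re, Complex.neg_re] at this
    linarith
  rw [has, hs_re] at hare
  simp only [Complex.mul_re, Complex.ofReal_re, Complex.ofReal_im, mul_zero, sub_zero] at hare
  have := mul_eq_zero.mp hare
  rcases this with h | h
  · exact h
  · exact absurd h (ne_of_gt hspos)

/-- All coefficients of the characteristic polynomial of a real skew-symmetric matrix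
are nonnegative: writing `det(λI - S) = Σ_{i≥0} c_{2i} λ^{n-2i}`, we have `c_{2i} ≥ 0`
for all `0 ≤ i ≤ ⌊n/2⌋`. -/
theorem charpoly_coeff_nonneg {n : ℕ}
    (S : Matrix (Fin n) (Fin n) ℝ) (hskew : Sᵀ = -S)
    (i : ℕ) (hi : 2 * i ≤ n) : 0 ≤ S.charpoly.coeff (n - 2 * i) := by
  exact aux_nonneg_coeff S.charpoly.natDegree S.charpoly rfl S.charpoly_monic
    (aux_root_im S hskew) _
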